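/- For every natural number n, one has the integer identity 3 · ∑_{i=0}^{n} (6·binom(n, i + 2) + 5·binom(n, i + 1) + binom(n, i)) · (−6)^i = 3n + 2 + (−5)ⁿ. Equivalently, ∑_{i=0}^{n} e_{n−i}(3, 2, 1ⁿ) · (−6)^i = (3n + 2 + (−5)ⁿ)/3, where e_k(3, 2, 1ⁿ) denotes the k-th elementary symmetric function of the multiset consisting of 3, 2, and n copies of 1. (This computes the degree of the top Chern class of a smooth del Pezzo variety of dimension n and degree one, realized as a degree-6 weighted hypersurface in ℙ(3, 2, 1, …, 1).) -/
import Mathlib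

lemma my_esymm_zero (s : Multiset ℤ) : s.esymm 0 = 1 := by
  simp [Multiset.esymm]

lemma my_esymm_cons (a : ℤ) (s : Multiset ℤ) (k : ℕ) :
    (a ::ₘ s).esymm (k + 1) = s.esymm (k + 1) + a * s.esymm k := by
  simp only [Multiset.esymm, Multiset.powersetCard_cons, Multiset.map_add, Multiset.sum_add,
    Multiset.map_map, Function.comp_def, Multiset.prod_cons]
  rw [Multiset.sum_map_mul_left]

lemma my_esymm_replicate (n k : ℕ) :
    (Multiset.replicate n (1 : ℤ)).esymm k = n.choose k := by
  rw [Multiset.esymm]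
  have hc : Multiset.map Multiset.prod ((Multiset.replicate n (1 : ℤ)).powersetCard k)
      = Multiset.map (fun _ => (1 : ℤ)) ((Multiset.replicate n (1 : ℤ)).powersetCard k) := by
    refine Multiset.map_congr rfl fun t ht => ?_
    refine Multiset.prod_eq_one fun x hx => ?_
    rw [Multiset.mem_powersetCard] at ht
    exact Multiset.eq_of_mem_replicate (Multiset.mem_of_le ht.1 hx)
  rw [hc, Multiset.map_const', Multiset.sum_replicate, Multiset.card_powersetCard,
    Multiset.card_replicate]
  simp

lemma key_esymm (n i : ℕ) (h : i ≤ n) :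
    (({3, 2} : Multiset ℤ) + Multiset.replicate n 1).esymm (n - i)
      = 6 * (n.choose (i + 2) : ℤ) + 5 * (n.choose (i + 1) : ℤ) + (n.choose i : ℤ) := by
  have hM : ({3, 2} : Multiset ℤ) + Multiset.replicate n 1
      = 3 ::ₘ 2 ::ₘ Multiset.replicate n 1 := by
    simp [Multiset.insert_eq_cons, Multiset.cons_add]
  rw [hM]
  rcases Nat.lt_or_ge i (n - 1) with hi | hi
  · -- n - i = j + 2
    obtain ⟨j, hj⟩ : ∃ j, n - i = j + 2 := ⟨n - i - 2, by omega⟩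
    rw [hj, my_esymm_cons, my_esymm_cons, my_esymm_cons, my_esymm_replicate,
      my_esymm_replicate, my_esymm_replicate]
    have e1 : n.choose (j + 2) = n.choose i := by
      rw [show j + 2 = n - i from hj.symm, Nat.choose_symm h]
    have e2 : n.choose (j + 1) = n.choose (i + 1) := by
      rw [show j + 1 = n - (i + 1) by omega, Nat.choose_symm (by omega)]
    have e3 : n.choose j = n.choose (i + 2) := by
      rw [show j = n - (i + 2) by omega, Nat.choose_symm (by omega)]
    rw [e1, e2, e3]; ring
  · rcases Nat.lt_or_ge i n with hi2 | hi2
    · -- i = n - 1, n - i = 1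
      have c2 : (n.choose (i + 2) : ℤ) = 0 := by
        simp [Nat.choose_eq_zero_of_lt (show n < i + 2 by omega)]
      have c1 : (n.choose (i + 1) : ℤ) = 1 := by
        rw [show i + 1 = n by omega, Nat.choose_self, Nat.cast_one]
      have c0 : (n.choose i : ℤ) = n := by
        rw [show i = n - 1 by omega, Nat.choose_symm (by omega : 1 ≤ n),
          Nat.choose_one_right]
      rw [show n - i = 0 + 1 by omega, my_esymm_cons, my_esymm_cons, my_esymm_replicate,
        my_esymm_replicate, my_esymm_zero, c2, c1, c0]
      norm_num [Nat.choose_one_right]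
      omega
    · -- i = n
      have : i = n := le_antisymm h hi2
      subst this
      rw [Nat.sub_self, my_esymm_zero, Nat.choose_eq_zero_of_lt (by omega),
        Nat.choose_eq_zero_of_lt (by omega), Nat.choose_self]
      norm_num

/-- `3·∑_{i=0}^{n} (6·binom(n, i+2) + 5·binom(n, i+1) + binom(n, i))·(−6)^i = 3n + 2 + (−5)ⁿ`;
equivalently `∑_{i=0}^{n} e_{n−i}(3, 2, 1ⁿ)·(−6)^i = (3n + 2 + (−5)ⁿ)/3`, where `e_k(3, 2, 1ⁿ)`
is the `k`-th elementary symmetric function of the multiset consisting of `3`, `2` and `n`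
copies of `1`.  This is the degree of the top Chern class of a smooth del Pezzo variety of
dimension `n` and degree one. -/
theorem delPezzo_degree_one_chern (n : ℕ) :
    3 * ∑ i ∈ Finset.range (n + 1),
        (6 * (n.choose (i + 2) : ℤ) + 5 * (n.choose (i + 1) : ℤ) + (n.choose i : ℤ))
          * (-6) ^ i
      = 3 * (n : ℤ) + 2 + (-5) ^ n ∧
    (∑ i ∈ Finset.range (n + 1),
        (((({3, 2} : Multiset ℤ) + Multiset.replicate n 1).esymm (n - i) : ℤ) : ℚ)
          * (-6) ^ i)
      = (3 * (n : ℚ) + 2 + (-5) ^ n) / 3 := by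
  have hS0 : ∑ i ∈ Finset.range (n + 1), (n.choose i : ℤ) * (-6) ^ i = (-5) ^ n := by
    have := add_pow (-6 : ℤ) 1 n
    norm_num at this
    rw [this]
    exact Finset.sum_congr rfl fun i _ => by ring
  have hS1 : (-6) * ∑ i ∈ Finset.range (n + 1), (n.choose (i + 1) : ℤ) * (-6) ^ i
      = (-5) ^ n - 1 := by
    have h2 : ∑ j ∈ Finset.range (n + 2), (n.choose j : ℤ) * (-6) ^ j = (-5) ^ n := by
      rw [Finset.sum_range_succ, hS0, Nat.choose_succ_self]; norm_num
    rw [Finset.sum_range_succ'] at h2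
    rw [Finset.mul_sum]
    have : ∀ i ∈ Finset.range (n + 1),
        (-6 : ℤ) * ((n.choose (i + 1) : ℤ) * (-6) ^ i)
          = (n.choose (i + 1) : ℤ) * (-6) ^ (i + 1) := fun i _ => by ring
    rw [Finset.sum_congr rfl this]
    simp only [Nat.choose_zero_right, Nat.cast_one, pow_zero, mul_one] at h2
    linarith
  have hS2 : (36 : ℤ) * ∑ i ∈ Finset.range (n + 1), (n.choose (i + 2) : ℤ) * (-6) ^ i
      = (-5) ^ n + 6 * n - 1 := by
    have h3 : ∑ j ∈ Finset.range (n + 3), (n.choose j : ℤ) * (-6) ^ j = (-5) ^ n := by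
      rw [Finset.sum_range_succ, Finset.sum_range_succ, hS0,
        Nat.choose_succ_self, Nat.choose_eq_zero_of_lt (by omega)]
      norm_num
    rw [Finset.sum_range_succ', Finset.sum_range_succ'] at h3
    rw [Finset.mul_sum]
    have : ∀ i ∈ Finset.range (n + 1),
        (36 : ℤ) * ((n.choose (i + 2) : ℤ) * (-6) ^ i)
          = (n.choose (i + 2) : ℤ) * (-6) ^ (i + 2) := fun i _ => by ring
    rw [Finset.sum_congr rfl this]
    norm_num at h3
    linarith
  have expand : ∑ i ∈ Finset.range (n + 1),
        (6 * (n.choose (i + 2) : ℤ) + 5 * (n.choose (i + 1) : ℤ) + (n.choose i : ℤ))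
          * (-6) ^ i
      = 6 * (∑ i ∈ Finset.range (n + 1), (n.choose (i + 2) : ℤ) * (-6) ^ i)
        + 5 * (∑ i ∈ Finset.range (n + 1), (n.choose (i + 1) : ℤ) * (-6) ^ i)
        + ∑ i ∈ Finset.range (n + 1), (n.choose i : ℤ) * (-6) ^ i := by
    rw [Finset.mul_sum, Finset.mul_sum, ← Finset.sum_add_distrib, ← Finset.sum_add_distrib]
    exact Finset.sum_congr rfl fun i _ => by ring
  have part1 : 3 * ∑ i ∈ Finset.range (n + 1),
        (6 * (n.choose (i + 2) : ℤ) + 5 * (n.choose (i + 1) : ℤ) + (n.choose i : ℤ))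
          * (-6) ^ i
      = 3 * (n : ℤ) + 2 + (-5) ^ n := by
    rw [expand]
    apply mul_left_cancel₀ (two_ne_zero (α := ℤ))
    linear_combination hS2 - 5 * hS1 + 6 * hS0
  refine ⟨part1, ?_⟩
  have hsum : ∀ i ∈ Finset.range (n + 1),
      (((({3, 2} : Multiset ℤ) + Multiset.replicate n 1).esymm (n - i) : ℤ) : ℚ) * (-6) ^ i
        = ((6 * (n.choose (i + 2) : ℤ) + 5 * (n.choose (i + 1) : ℤ) + (n.choose i : ℤ) : ℤ) : ℚ)
            * (-6) ^ i := by
    intro i hi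
    rw [key_esymm n i (Nat.lt_succ_iff.1 (Finset.mem_range.1 hi))]
  rw [Finset.sum_congr rfl hsum]
  have hq : (3 : ℚ) * ∑ i ∈ Finset.range (n + 1),
      ((6 * (n.choose (i + 2) : ℤ) + 5 * (n.choose (i + 1) : ℤ) + (n.choose i : ℤ) : ℤ) : ℚ)
        * (-6) ^ i
      = 3 * (n : ℚ) + 2 + (-5) ^ n := by
    exact_mod_cast congrArg (fun z : ℤ => (z : ℚ)) part1
  rw [eq_div_iff (by norm_num : (3 : ℚ) ≠ 0)]
  linarith
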